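/- Let K be a field of characteristic 0 and extend τ to K(n)[x] = K(n)[X]/(X²−1) by sending f₀ + f₁·x to the germ of the sequence k ↦ f₀(k) + (−1)^k·f₁(k). Then τ: K(n)[x] → S(K) is an injective difference ring homomorphism, where σ(x) = −x on the source and S is the shift on germs. -/

import Mathlib

open Filter Polynomial

variable (K : Type*) [Field K]

/-- Evaluation of a rational function at the naturals, value `0` at poles. -/
noncomputable def evalSeq (f : RatFunc K) : ℕ → K :=
  fun k => RatFunc.eval (RingHom.id K) (k : K) f

variable {K}

lemma evalSeq_def (f : RatFunc K) (k : ℕ) :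
    evalSeq K f k = f.num.eval (k : K) / f.denom.eval (k : K) := rfl

lemma denom_eventually_ne_zero [CharZero K] (f : RatFunc K) :
    ∀ᶠ k : ℕ in atTop, f.denom.eval (k : K) ≠ 0 := by
  rw [← Nat.cofinite_eq_atTop]
  have hfin : Set.Finite {x : K | f.denom.IsRoot x} :=
    Polynomial.finite_setOf_isRoot (RatFunc.denom_ne_zero f)
  have : Set.Finite {k : ℕ | f.denom.eval (k : K) = 0} := by
    have := hfin.preimage (f := (Nat.cast : ℕ → K)) (Nat.cast_injective.injOn)
    exact this
  exact this.eventually_cofinite_notMem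

lemma eval₂_id_eq (p : Polynomial K) (a : K) :
    Polynomial.eval₂ (RingHom.id K) a p = p.eval a := rfl

lemma evalSeq_eventually_add [CharZero K] (f g : RatFunc K) :
    ∀ᶠ k : ℕ in atTop, evalSeq K (f + g) k = evalSeq K f k + evalSeq K g k := by
  filter_upwards [denom_eventually_ne_zero f, denom_eventually_ne_zero g] with k hf hg
  simpa [evalSeq] using RatFunc.eval_add (f := RingHom.id K) (a := (k : K)) hf hg

lemma evalSeq_eventually_mul [CharZero K] (f g : RatFunc K) :
    ∀ᶠ k : ℕ in atTop, evalSeq K (f * g) k = evalSeq K f k * evalSeq K g k := by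
  filter_upwards [denom_eventually_ne_zero f, denom_eventually_ne_zero g] with k hf hg
  simpa [evalSeq] using RatFunc.eval_mul (f := RingHom.id K) (a := (k : K)) hf hg

lemma evalSeq_eventually_sub [CharZero K] (f g : RatFunc K) :
    ∀ᶠ k : ℕ in atTop, evalSeq K (f - g) k = evalSeq K f k - evalSeq K g k := by
  filter_upwards [evalSeq_eventually_add g (f - g)] with k h
  rw [add_sub_cancel] at h
  rw [h]; ring

lemma eq_zero_of_infinite_evalSeq_zero [CharZero K] (f : RatFunc K)
    (h : {k : ℕ | evalSeq K f k = 0}.Infinite) : f = 0 := by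
  have hd := denom_eventually_ne_zero f
  rw [eventually_atTop] at hd
  obtain ⟨N, hN⟩ := hd
  have hnum : {x : K | f.num.IsRoot x}.Infinite := by
    have hsub : (Nat.cast : ℕ → K) '' ({k : ℕ | evalSeq K f k = 0} ∩ Set.Ici N)
        ⊆ {x : K | f.num.IsRoot x} := by
      rintro x ⟨k, ⟨hk, hkN⟩, rfl⟩
      have hdk := hN k hkN
      rw [Set.mem_setOf_eq, evalSeq_def, _root_.div_eq_zero_iff] at hk
      rcases hk with hk | hk
      · exact hk
      · exact absurd hk hdk
    refine Set.Infinite.mono hsub ?_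
    have hinf : ({k : ℕ | evalSeq K f k = 0} ∩ Set.Ici N).Infinite := by
      refine ((h.diff (Set.finite_Iio N)).mono ?_)
      intro x hx
      exact ⟨hx.1, by simpa using hx.2⟩
    exact hinf.image (Nat.cast_injective.injOn)
  have : f.num = 0 := by
    by_contra hne
    exact (Polynomial.finite_setOf_isRoot hne).not_infinite hnum
  exact (RatFunc.num_eq_zero_iff).mp this

lemma evalSeq_eventually_neg [CharZero K] (f : RatFunc K) :
    ∀ᶠ k : ℕ in atTop, evalSeq K (-f) k = - evalSeq K f k := by
  filter_upwards [evalSeq_eventually_sub 0 f] with k h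
  have h0 : evalSeq K (0 : RatFunc K) k = 0 := by simp [evalSeq]
  rw [zero_sub] at h
  rw [h, h0, zero_sub]

lemma evalSeq_sigma [CharZero K] (σ : RatFunc K ≃+* RatFunc K)
    (hσ : ∀ q : Polynomial K,
      σ (algebraMap (Polynomial K) (RatFunc K) q)
        = algebraMap (Polynomial K) (RatFunc K) (Polynomial.taylor (1 : K) q))
    (f : RatFunc K) :
    ∀ᶠ k : ℕ in atTop, evalSeq K (σ f) k = evalSeq K f (k + 1) := by
  have key : σ f * algebraMap _ _ (taylor (1 : K) f.denom)
      = algebraMap _ _ (taylor (1 : K) f.num) := by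
    have h1 : f * algebraMap _ (RatFunc K) f.denom = algebraMap _ _ f.num := by
      rw [← eq_div_iff (RatFunc.algebraMap_ne_zero (RatFunc.denom_ne_zero f))]
      exact (RatFunc.num_div_denom f).symm
    have := congrArg σ h1
    rw [map_mul, hσ, hσ] at this
    exact this
  have hshift : ∀ᶠ k : ℕ in atTop, f.denom.eval ((k : K) + 1) ≠ 0 := by
    have := (tendsto_add_atTop_nat 1).eventually (denom_eventually_ne_zero f)
    simpa using this
  filter_upwards [denom_eventually_ne_zero (σ f), hshift] with k h1 h2
  have hd1 : Polynomial.eval₂ (RingHom.id K) (k : K)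
      (RatFunc.denom (algebraMap _ (RatFunc K) (taylor (1 : K) f.denom))) ≠ 0 := by
    rw [RatFunc.denom_algebraMap]
    simp
  have := congrArg (RatFunc.eval (RingHom.id K) (k : K)) key
  rw [RatFunc.eval_mul (f := RingHom.id K) (a := (k : K)) h1 hd1, RatFunc.eval_algebraMap, RatFunc.eval_algebraMap] at this
  simp only [Algebra.algebraMap_self, Polynomial.map_id, RingHom.id_apply] at this
  rw [eval₂_id_eq, eval₂_id_eq, taylor_eval, taylor_eval] at this
  have goal1 : RatFunc.eval (RingHom.id K) (k : K) (σ f)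
      = f.num.eval ((k : K) + 1) / f.denom.eval ((k : K) + 1) := by
    rw [eq_div_iff h2]
    exact this
  rw [evalSeq, goal1, evalSeq_def]
  push_cast
  ring_nf

variable (K)

/-- `τ` extended to `K(n)[x] = K(n)[X]/(X²-1)`, whose elements are represented
as pairs `f = f₀ + f₁·x`: it sends `f` to the germ of `k ↦ f₀(k) + (-1)^k·f₁(k)`. -/
noncomputable def tau2 (f : RatFunc K × RatFunc K) : Germ (atTop : Filter ℕ) K :=
  Germ.ofFun (fun k => evalSeq K f.1 k + (-1 : K) ^ k * evalSeq K f.2 k)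

/-- `τ : K(n)[x] → S(K)` is an injective difference ring homomorphism, where on
`K(n)[x]` (with `x² = 1`, so `(f₀,f₁)·(g₀,g₁) = (f₀g₀+f₁g₁, f₀g₁+f₁g₀)`) the
automorphism is `σ(f₀ + f₁ x) = σ(f₀) - σ(f₁)·x`, and `S` is the shift on germs. -/
theorem tau2_is_difference_ring_embedding [CharZero K]
    (σ : RatFunc K ≃+* RatFunc K)
    (hσ : ∀ q : Polynomial K,
      σ (algebraMap (Polynomial K) (RatFunc K) q)
        = algebraMap (Polynomial K) (RatFunc K) (Polynomial.taylor (1 : K) q)) :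
    Function.Injective (tau2 K) ∧
    tau2 K (1, 0) = 1 ∧
    (∀ f g : RatFunc K × RatFunc K, tau2 K (f.1 + g.1, f.2 + g.2) = tau2 K f + tau2 K g) ∧
    (∀ f g : RatFunc K × RatFunc K,
      tau2 K (f.1 * g.1 + f.2 * g.2, f.1 * g.2 + f.2 * g.1) = tau2 K f * tau2 K g) ∧
    (∀ f : RatFunc K × RatFunc K,
      tau2 K (σ f.1, -σ f.2)
        = (tau2 K f).compTendsto (fun n => n + 1) (tendsto_add_atTop_nat 1)) := by
  refine ⟨?_, ?_, ?_, ?_, ?_⟩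
  · -- injectivity
    intro f g h
    rw [tau2, tau2, Germ.coe_eq] at h
    set h₀ := f.1 - g.1 with hh₀
    set h₁ := f.2 - g.2 with hh₁
    have hev : ∀ᶠ k : ℕ in atTop,
        evalSeq K h₀ k + (-1 : K) ^ k * evalSeq K h₁ k = 0 := by
      filter_upwards [h, evalSeq_eventually_sub f.1 g.1, evalSeq_eventually_sub f.2 g.2]
        with k hk h0k h1k
      rw [hh₀, h0k, hh₁, h1k]
      linear_combination hk
    obtain ⟨N, hN⟩ := eventually_atTop.mp
      (hev.and ((evalSeq_eventually_add h₀ h₁).and (evalSeq_eventually_sub h₀ h₁)))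
    have hA : h₀ + h₁ = 0 := by
      apply eq_zero_of_infinite_evalSeq_zero
      apply Set.infinite_of_injective_forall_mem (f := fun i : ℕ => 2 * (i + N))
      case hi =>
        intro a b hab; simpa using hab
      case hf =>
        intro i
        obtain ⟨he, ha, _⟩ := hN (2 * (i + N)) (by omega)
        have hpow : (-1 : K) ^ (2 * (i + N)) = 1 := Even.neg_one_pow ⟨i + N, by ring⟩
        rw [hpow, one_mul] at he
        simpa [ha] using he
    have hB : h₀ - h₁ = 0 := by
      apply eq_zero_of_infinite_evalSeq_zero
      apply Set.infinite_of_injective_forall_mem (f := fun i : ℕ => 2 * (i + N) + 1)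
      case hi =>
        intro a b hab; simpa using hab
      case hf =>
        intro i
        obtain ⟨he, _, hs⟩ := hN (2 * (i + N) + 1) (by omega)
        have hpow : (-1 : K) ^ (2 * (i + N) + 1) = -1 :=
          Odd.neg_one_pow ⟨i + N, by ring⟩
        rw [hpow] at he
        have : evalSeq K h₀ (2 * (i + N) + 1) - evalSeq K h₁ (2 * (i + N) + 1) = 0 := by
          linear_combination he
        simpa [hs] using this
    have h0z : h₀ = 0 := by
      have := congrArg₂ (· + ·) hA hB
      simp only [add_zero] at this
      have h2 : (2 : RatFunc K) ≠ 0 := by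
        have : ((algebraMap (Polynomial K) (RatFunc K)) 2) ≠ 0 :=
          RatFunc.algebraMap_ne_zero (by norm_num)
        rwa [map_ofNat] at this
      have : (2 : RatFunc K) * h₀ = 0 := by linear_combination this
      exact (mul_eq_zero.mp this).resolve_left h2
    have h1z : h₁ = 0 := by
      rw [h0z] at hA
      simpa using hA
    have e1 : f.1 = g.1 := sub_eq_zero.mp h0z
    have e2 : f.2 = g.2 := sub_eq_zero.mp h1z
    exact Prod.ext e1 e2
  · -- one
    rw [tau2]
    have : ∀ k : ℕ, evalSeq K ((1, (0 : RatFunc K)).1) k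
        + (-1 : K) ^ k * evalSeq K ((1, (0 : RatFunc K)).2) k = 1 := by
      intro k; simp [evalSeq]
    simp only [this]
    rfl
  · -- add
    intro f g
    rw [tau2, tau2, tau2, ← Germ.coe_add, Germ.coe_eq]
    filter_upwards [evalSeq_eventually_add f.1 g.1, evalSeq_eventually_add f.2 g.2]
      with k h1 h2
    simp only [Pi.add_apply, h1, h2]
    ring
  · -- mul
    intro f g
    rw [tau2, tau2, tau2, ← Germ.coe_mul, Germ.coe_eq]
    filter_upwards [evalSeq_eventually_add (f.1 * g.1) (f.2 * g.2),
      evalSeq_eventually_add (f.1 * g.2) (f.2 * g.1),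
      evalSeq_eventually_mul f.1 g.1, evalSeq_eventually_mul f.2 g.2,
      evalSeq_eventually_mul f.1 g.2, evalSeq_eventually_mul f.2 g.1]
      with k h1 h2 h3 h4 h5 h6
    simp only [Pi.mul_apply, h1, h2, h3, h4, h5, h6]
    have hs : (-1 : K) ^ (k * 2) = 1 := Even.neg_one_pow ⟨k, by ring⟩
    linear_combination (-(evalSeq K f.2 k * evalSeq K g.2 k)) * hs
  · -- shift
    intro f
    rw [tau2, tau2, Germ.coe_compTendsto, Germ.coe_eq]
    filter_upwards [evalSeq_sigma σ hσ f.1, evalSeq_sigma σ hσ f.2,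
      evalSeq_eventually_neg (σ f.2),
      (tendsto_add_atTop_nat 1).eventually (evalSeq_eventually_neg (σ f.2))]
      with k h1 h2 h3 _
    simp only [Function.comp_apply, h1, h3, h2, pow_succ]
    ring
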